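/- If there exists a Butson Hadamard matrix in BH(n,4), then there exists a real Hadamard matrix of order 2n. -/

import Mathlib

/-- A Butson Hadamard matrix with entries in the `k`-th roots of unity:
every entry is a `k`-th root of unity and `H * Hᴴ = n • 1` where `n` is the order. -/
def IsButson {ι : Type*} [Fintype ι] [DecidableEq ι] (k : ℕ) (H : Matrix ι ι ℂ) : Prop :=
  (∀ i j, H i j ^ k = 1) ∧ H * H.conjTranspose = (Fintype.card ι : ℂ) • 1

/-- A real Hadamard matrix: entries in `{±1}` and `H * Hᵀ = n • 1`. -/
def IsHadamard {ι : Type*} [Fintype ι] [DecidableEq ι] (H : Matrix ι ι ℝ) : Prop :=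
  (∀ i j, H i j = 1 ∨ H i j = -1) ∧ H * H.transpose = (Fintype.card ι : ℝ) • 1

open Matrix in
lemma fourth_root_cases (z : ℂ) (hz : z ^ 4 = 1) :
    z = 1 ∨ z = -1 ∨ z = Complex.I ∨ z = -Complex.I := by
  have h : (z - 1) * (z + 1) * (z - Complex.I) * (z + Complex.I) = 0 := by
    have : z^4 - 1 = 0 := by rw [hz]; ring
    calc (z - 1) * (z + 1) * (z - Complex.I) * (z + Complex.I)
        = z^4 - 1 := by ring_nf; rw [Complex.I_sq]; ring
      _ = 0 := this
  rcases mul_eq_zero.1 h with h | h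
  · rcases mul_eq_zero.1 h with h | h
    · rcases mul_eq_zero.1 h with h | h
      · left; linear_combination h
      · right; left; linear_combination h
    · right; right; left; linear_combination h
  · right; right; right; linear_combination h

open scoped Matrix in
theorem stmt_3 (n : ℕ) (hn : 0 < n)
    (h : ∃ H : Matrix (Fin n) (Fin n) ℂ, IsButson 4 H) :
    ∃ M : Matrix (Fin (2 * n)) (Fin (2 * n)) ℝ, IsHadamard M := by
  obtain ⟨H, hroot, hprod⟩ := h
  set A : Matrix (Fin n) (Fin n) ℝ := fun i j => (H i j).re with hA
  set B : Matrix (Fin n) (Fin n) ℝ := fun i j => (H i j).im with hB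
  have hcases : ∀ i j, (A i j = 1 ∧ B i j = 0) ∨ (A i j = -1 ∧ B i j = 0)
      ∨ (A i j = 0 ∧ B i j = 1) ∨ (A i j = 0 ∧ B i j = -1) := by
    intro i j
    rcases fourth_root_cases _ (hroot i j) with h | h | h | h <;>
      simp [hA, hB, h, Complex.I_re, Complex.I_im]
  have key1 : A * Aᵀ + B * Bᵀ = (n : ℝ) • 1 := by
    ext i j
    have h0 := congrArg (fun M => ((M i j).re)) hprod
    simp only [Matrix.mul_apply, Matrix.conjTranspose_apply, Matrix.smul_apply] at h0
    rw [Complex.re_sum] at h0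
    have hsum : ∑ l, (H i l * star (H j l)).re = ∑ l, (A i l * A j l + B i l * B j l) := by
      refine Finset.sum_congr rfl fun l _ => ?_
      simp [Complex.mul_re, Complex.star_def, hA, hB]
    rw [hsum] at h0
    simp only [Matrix.add_apply, Matrix.mul_apply, Matrix.transpose_apply, Matrix.smul_apply]
    rw [← Finset.sum_add_distrib, h0]
    by_cases hij : i = j <;> simp [hij, Matrix.one_apply]
  have key2 : A * Bᵀ = B * Aᵀ := by
    ext i j
    have h0 := congrArg (fun M => ((M i j).im)) hprod
    simp only [Matrix.mul_apply, Matrix.conjTranspose_apply, Matrix.smul_apply] at h0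
    rw [Complex.im_sum] at h0
    have hsum : ∑ l, (H i l * star (H j l)).im = ∑ l, (B i l * A j l - A i l * B j l) := by
      refine Finset.sum_congr rfl fun l _ => ?_
      simp [Complex.mul_im, Complex.star_def, hA, hB]
      ring
    have hz : ((Fintype.card (Fin n) : ℂ) • (1 : Matrix (Fin n) (Fin n) ℂ) i j).im = 0 := by
      by_cases hij : i = j <;> simp [hij, Matrix.one_apply]
    rw [hsum, hz] at h0
    rw [Finset.sum_sub_distrib] at h0
    have h1 := sub_eq_zero.mp h0
    simp only [Matrix.mul_apply, Matrix.transpose_apply]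
    exact h1.symm
  set M' : Matrix (Fin n ⊕ Fin n) (Fin n ⊕ Fin n) ℝ :=
    Matrix.fromBlocks (A + B) (A - B) (A - B) (-(A + B)) with hM'
  have hent : ∀ i j, M' i j = 1 ∨ M' i j = -1 := by
    rintro (i | i) (j | j) <;>
      rcases hcases i j with ⟨h1, h2⟩ | ⟨h1, h2⟩ | ⟨h1, h2⟩ | ⟨h1, h2⟩ <;>
      simp [hM', Matrix.fromBlocks, h1, h2]
  have hMprod : M' * M'ᵀ = ((Fintype.card (Fin n ⊕ Fin n) : ℝ)) • 1 := by
    rw [hM', Matrix.fromBlocks_transpose, Matrix.fromBlocks_multiply]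
    have e1 : (A + B) * (A + B)ᵀ + (A - B) * (A - B)ᵀ = (2 * n : ℝ) • 1 := by
      simp only [Matrix.transpose_add, Matrix.transpose_sub]
      rw [Matrix.add_mul, Matrix.sub_mul, Matrix.mul_add, Matrix.mul_sub, Matrix.mul_add,
        Matrix.mul_sub]
      have : A * Aᵀ + B * Bᵀ + (A * Aᵀ + B * Bᵀ) = ((2 * n : ℝ)) • 1 := by
        rw [key1]; module
      rw [← this]; abel
    have e2 : (A + B) * (A - B)ᵀ + (A - B) * (-(A + B))ᵀ = 0 := by
      simp only [Matrix.transpose_add, Matrix.transpose_sub, Matrix.transpose_neg]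
      rw [Matrix.mul_neg, Matrix.add_mul, Matrix.sub_mul, Matrix.mul_add, Matrix.mul_sub,
        Matrix.mul_add, Matrix.mul_sub]
      rw [key2]; abel
    have e3 : (A - B) * (A + B)ᵀ + (-(A + B)) * (A - B)ᵀ = 0 := by
      simp only [Matrix.transpose_add, Matrix.transpose_sub]
      rw [Matrix.neg_mul, Matrix.add_mul, Matrix.sub_mul, Matrix.mul_add, Matrix.mul_sub,
        Matrix.mul_add, Matrix.mul_sub]
      rw [key2]; abel
    have e4 : (A - B) * (A - B)ᵀ + (-(A + B)) * (-(A + B))ᵀ = (2 * n : ℝ) • 1 := by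
      simp only [Matrix.transpose_sub, Matrix.transpose_neg, Matrix.transpose_add]
      rw [Matrix.neg_mul, Matrix.mul_neg, neg_neg, Matrix.add_mul, Matrix.sub_mul,
        Matrix.mul_add, Matrix.mul_sub, Matrix.mul_add, Matrix.mul_sub]
      have : A * Aᵀ + B * Bᵀ + (A * Aᵀ + B * Bᵀ) = ((2 * n : ℝ)) • 1 := by
        rw [key1]; module
      rw [← this]; abel
    rw [e1, e2, e3, e4]
    have hc : (Fintype.card (Fin n ⊕ Fin n) : ℝ) = 2 * n := by
      simp; ring
    rw [hc]
    ext (i | i) (j | j) <;>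
      by_cases hij : i = j <;>
      simp [hij, Matrix.fromBlocks, Matrix.one_apply, Matrix.smul_apply]
  set e : (Fin n ⊕ Fin n) ≃ Fin (2 * n) :=
    finSumFinEquiv.trans (finCongr (two_mul n).symm) with he
  refine ⟨Matrix.reindex e e M', ?_, ?_⟩
  · intro i j
    exact hent _ _
  · have : (Matrix.reindex e e M') * (Matrix.reindex e e M')ᵀ
        = Matrix.reindex e e (M' * M'ᵀ) := by
      simp [Matrix.reindex_apply, Matrix.transpose_submatrix, Matrix.submatrix_mul_equiv]
    rw [this, hMprod]
    have hc : (Fintype.card (Fin n ⊕ Fin n) : ℝ) = (Fintype.card (Fin (2 * n)) : ℝ) := by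
      simp; ring
    rw [hc]
    ext i j
    by_cases hij : i = j <;>
      simp [Matrix.reindex_apply, Matrix.submatrix_apply, Matrix.one_apply, hij]
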